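/- Let A and B be strictly positive definite m×m complex matrices. Then for all m×m matrices C and D, tr[C* ((A,B)# D)] equals the complex conjugate of tr[D* ((A,B)# C)]. -/

import Mathlib

open MeasureTheory Matrix
open scoped ComplexOrder

attribute [local instance] Matrix.frobeniusNormedAddCommGroup Matrix.frobeniusNormedSpace

variable {m : ℕ}

/-- `(A,B)#C = ∫₀¹ A^{1-s} C B^s ds`, with powers by functional calculus. -/
noncomputable def matSharp (A B C : Matrix (Fin m) (Fin m) ℂ) : Matrix (Fin m) (Fin m) ℂ :=
  ∫ s in (0:ℝ)..1,
    cfc (fun t : ℝ => t ^ (1 - s)) A * C * cfc (fun t : ℝ => t ^ s) B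

/-- `(A,B)♯̂C = ∫₀^∞ (A+xI)⁻¹ C (B+xI)⁻¹ dx`. -/
noncomputable def matSharpHat (A B C : Matrix (Fin m) (Fin m) ℂ) : Matrix (Fin m) (Fin m) ℂ :=
  ∫ x in Set.Ioi (0:ℝ), (A + (x : ℂ) • 1)⁻¹ * C * (B + (x : ℂ) • 1)⁻¹


lemma cfc_rpow_continuous (A : Matrix (Fin m) (Fin m) ℂ) (hA : A.PosDef) {g : ℝ → ℝ}
    (hg : Continuous g) :
    Continuous fun s : ℝ => cfc (fun t : ℝ => t ^ g s) A := by
  have hAh := hA.1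
  have heq : (fun s : ℝ => cfc (fun t : ℝ => t ^ g s) A)
      = fun s : ℝ => (hAh.eigenvectorUnitary : Matrix (Fin m) (Fin m) ℂ) *
        Matrix.diagonal (fun i => ((hAh.eigenvalues i ^ g s : ℝ) : ℂ)) *
        star (hAh.eigenvectorUnitary : Matrix (Fin m) (Fin m) ℂ) := by
    funext s
    rw [hAh.cfc_eq]
    simp only [Matrix.IsHermitian.cfc]; rfl
  rw [heq]
  refine Continuous.matrix_mul (Continuous.matrix_mul continuous_const ?_) continuous_const
  refine Continuous.matrix_diagonal (continuous_pi fun i => ?_)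
  have hpos := hA.eigenvalues_pos (i := i)
  have h1 : Continuous fun x : ℝ => (hAh.eigenvalues i) ^ x :=
    continuous_iff_continuousAt.2 fun x => Real.continuousAt_const_rpow (ne_of_gt hpos)
  exact Complex.continuous_ofReal.comp (h1.comp hg)

/-- For strictly positive definite `A`, `B` and all `C`, `D`:
`tr[C* ((A,B)# D)]` is the complex conjugate of `tr[D* ((A,B)# C)]`. -/
theorem trace_sharp_conj_symm (A B : Matrix (Fin m) (Fin m) ℂ)
    (hA : A.PosDef) (hB : B.PosDef) (C D : Matrix (Fin m) (Fin m) ℂ) :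
    (Cᴴ * matSharp A B D).trace = starRingEnd ℂ ((Dᴴ * matSharp A B C).trace) := by
  set P : ℝ → Matrix (Fin m) (Fin m) ℂ := fun s => cfc (fun t : ℝ => t ^ (1 - s)) A with hPdef
  set Q : ℝ → Matrix (Fin m) (Fin m) ℂ := fun s => cfc (fun t : ℝ => t ^ s) B with hQdef
  have hPc : Continuous P := cfc_rpow_continuous A hA (continuous_const.sub continuous_id)
  have hQc : Continuous Q := by
    have := cfc_rpow_continuous B hB (continuous_id : Continuous fun s : ℝ => s)
    simpa using this
  have hP : ∀ s, (P s).IsHermitian := fun s => cfc_predicate _ A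
  have hQ : ∀ s, (Q s).IsHermitian := fun s => cfc_predicate _ B
  letI : ENormedAddMonoid (Matrix (Fin m) (Fin m) ℂ) :=
    NormedAddCommGroup.toENormedAddCommMonoid.toENormedAddMonoid
  have hint : ∀ X : Matrix (Fin m) (Fin m) ℂ,
      IntervalIntegrable (fun s => P s * X * Q s) volume 0 1 :=
    fun X => ((hPc.matrix_mul continuous_const).matrix_mul hQc).intervalIntegrable 0 1
  let L : Matrix (Fin m) (Fin m) ℂ → Matrix (Fin m) (Fin m) ℂ →L[ℂ] ℂ := fun X =>
    LinearMap.toContinuousLinearMap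
      ((Matrix.traceLinearMap (Fin m) ℂ ℂ).comp (LinearMap.mulLeft ℂ Xᴴ))
  have hL : ∀ X M : Matrix (Fin m) (Fin m) ℂ, L X M = (Xᴴ * M).trace := fun X M => rfl
  have key : ∀ X Y : Matrix (Fin m) (Fin m) ℂ,
      (Xᴴ * matSharp A B Y).trace = ∫ s in (0:ℝ)..1, (Xᴴ * (P s * Y * Q s)).trace := by
    intro X Y
    rw [matSharp, ← hL X]
    show L X (∫ s in (0:ℝ)..1, P s * Y * Q s) = _
    exact ((L X).intervalIntegral_comp_comm (hint Y)).symm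
  rw [key C D, key D C]
  have hcont2 : Continuous fun s => (Dᴴ * (P s * C * Q s)).trace :=
    (continuous_const.matrix_mul ((hPc.matrix_mul continuous_const).matrix_mul hQc)).matrix_trace
  have h3 : (starRingEnd ℂ) (∫ s in (0:ℝ)..1, (Dᴴ * (P s * C * Q s)).trace)
      = ∫ s in (0:ℝ)..1, (starRingEnd ℂ) ((Dᴴ * (P s * C * Q s)).trace) :=
    ((Complex.conjCLE.toContinuousLinearMap).intervalIntegral_comp_comm
      (hcont2.intervalIntegrable 0 1)).symm
  rw [h3]
  apply intervalIntegral.integral_congr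
  intro s _
  show (Cᴴ * (P s * D * Q s)).trace = star ((Dᴴ * (P s * C * Q s)).trace)
  rw [← Matrix.trace_conjTranspose]
  simp only [Matrix.conjTranspose_mul, Matrix.conjTranspose_conjTranspose, (hP s).eq, (hQ s).eq]
  simp only [Matrix.mul_assoc]
  rw [Matrix.trace_mul_comm (Q s)]
  simp only [Matrix.mul_assoc]
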